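/- Let (X,φ) be a non-wandering Smale space with an s/u-bijective pair (Y,ψ,f,Z,ζ,g), with fiber powers Z_M of Z over X and Σ_{L,M} = Y_L ×_X Z_M. Then for each M the natural map Σ_{0,M} → Z_M (projection forgetting the Y-coordinate) is an s-bijective factor map of Smale spaces, and Σ_{L,M} is canonically identified with the (L+1)-fold fiber product of Σ_{0,M} over Z_M. -/

import Mathlib

open Filter Topology

/-- A **Smale space** `(X, φ)`: a compact metric space `X` together with a
self-homeomorphism `φ` satisfying Ruelle's hyperbolicity axioms.  The bracket
`[x, y]` is encoded as a total function `bracket` which is only meaningful (and only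
constrained by the axioms) when `dist x y < eps`; `bracket x y` is the unique point of
`X^s(x, eps) ∩ X^u(y, eps)`. -/
structure SmaleSpace (X : Type) [MetricSpace X] [CompactSpace X] where
  phi : X ≃ₜ X
  eps : ℝ
  lam : ℝ
  eps_pos : 0 < eps
  lam_pos : 0 < lam
  lam_lt_one : lam < 1
  bracket : X → X → X
  bracket_cont : ContinuousOn (fun p : X × X => bracket p.1 p.2) {p | dist p.1 p.2 < eps}
  bracket_self : ∀ x, bracket x x = x
  bracket_assoc₁ : ∀ x y z, dist x y < eps → dist y z < eps → dist x z < eps →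
    bracket x (bracket y z) = bracket x z
  bracket_assoc₂ : ∀ x y z, dist x y < eps → dist y z < eps → dist x z < eps →
    bracket (bracket x y) z = bracket x z
  bracket_phi : ∀ x y, dist x y < eps → dist (phi x) (phi y) < eps →
    bracket (phi x) (phi y) = phi (bracket x y)
  stable_contract : ∀ x y, dist x y < eps → bracket x y = y →
    dist (phi x) (phi y) ≤ lam * dist x y
  unstable_contract : ∀ x y, dist x y < eps → bracket x y = x →
    dist (phi.symm x) (phi.symm y) ≤ lam * dist x y

namespace SmaleSpace

variable {X : Type} [MetricSpace X] [CompactSpace X]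

/-- Stable equivalence: forward orbits converge together. -/
def stablyEquiv (S : SmaleSpace X) (x y : X) : Prop :=
  Tendsto (fun n : ℕ => dist ((⇑S.phi)^[n] x) ((⇑S.phi)^[n] y)) atTop (𝓝 0)

/-- Unstable equivalence: backward orbits converge together. -/
def unstablyEquiv (S : SmaleSpace X) (x y : X) : Prop :=
  Tendsto (fun n : ℕ => dist ((⇑S.phi.symm)^[n] x) ((⇑S.phi.symm)^[n] y)) atTop (𝓝 0)

/-- The system is non-wandering: every point is non-wandering. -/
def NonWandering (S : SmaleSpace X) : Prop :=
  ∀ (x : X) (U : Set X), IsOpen U → x ∈ U →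
    ∃ n : ℕ, 0 < n ∧ (U ∩ (⇑S.phi)^[n] ⁻¹' U).Nonempty

/-- The local stable set `X^s(x, δ)`. -/
def locStable (S : SmaleSpace X) (x : X) (δ : ℝ) : Set X :=
  {y | dist x y < δ ∧ S.bracket x y = y}

/-- The local unstable set `X^u(y, δ)`. -/
def locUnstable (S : SmaleSpace X) (y : X) (δ : ℝ) : Set X :=
  {x | dist x y < δ ∧ S.bracket x y = x}

/-- `(X, φ)` has totally disconnected stable sets. -/
def TotallyDisconnectedStableSets (S : SmaleSpace X) : Prop :=
  ∀ x δ, IsTotallyDisconnected (S.locStable x δ)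

/-- `(X, φ)` has totally disconnected unstable sets. -/
def TotallyDisconnectedUnstableSets (S : SmaleSpace X) : Prop :=
  ∀ x δ, IsTotallyDisconnected (S.locUnstable x δ)

end SmaleSpace

/-- A factor map between Smale spaces: a continuous equivariant surjection. -/
structure FactorMap {X Y : Type} [MetricSpace X] [CompactSpace X] [MetricSpace Y]
    [CompactSpace Y] (S : SmaleSpace X) (S' : SmaleSpace Y) where
  toFun : X → Y
  continuous_toFun : Continuous toFun
  surjective : Function.Surjective toFun
  equivariant : ∀ x, toFun (S.phi x) = S'.phi (toFun x)

namespace FactorMap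

variable {X Y : Type} [MetricSpace X] [CompactSpace X] [MetricSpace Y] [CompactSpace Y]
  {S : SmaleSpace X} {S' : SmaleSpace Y}

/-- A factor map is `s`-bijective if it restricts to a bijection on every stable
equivalence class. -/
def IsSBijective (f : FactorMap S S') : Prop :=
  ∀ x : X, Set.BijOn f.toFun {y | S.stablyEquiv x y} {y | S'.stablyEquiv (f.toFun x) y}

/-- A factor map is `u`-bijective if it restricts to a bijection on every unstable
equivalence class. -/
def IsUBijective (f : FactorMap S S') : Prop :=
  ∀ x : X, Set.BijOn f.toFun {y | S.unstablyEquiv x y} {y | S'.unstablyEquiv (f.toFun x) y}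

end FactorMap

/-- Interface (taken as given data, not constructed here): **Putnam's stable homology**
`H^s_•(X, φ)` of a (non-wandering) Smale space `(X, φ)`.  It is defined from an
`s/u`-bijective pair `(Y, ψ, f, Z, ζ, g)` over `(X, φ)` as the homology of the double
complex of Krieger's stable dimension groups `D^s(Σ_{L,M}, σ_{L,M})` of the shifts of
finite type `Σ_{L,M} = Y_L ×_X Z_M`. -/
structure PutnamStableHomology {X : Type} [MetricSpace X] [CompactSpace X]
    (S : SmaleSpace X) : Type 1 where
  /-- The homology group `H^s_k(X, φ)`. -/
  H : ℤ → AddCommGrpCat.{0}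

/-- The `(n+1)`-fold fiber power `T_n` of a map `g : T0 → T`. -/
def FibPow {T0 T : Type} (g : T0 → T) (n : ℕ) : Type :=
  {t : Fin (n + 1) → T0 // ∀ i j, g (t i) = g (t j)}

instance {T0 T : Type} [TopologicalSpace T0] (g : T0 → T) (n : ℕ) :
    TopologicalSpace (FibPow g n) :=
  instTopologicalSpaceSubtype

/-- The induced map `g_n : T_n → T`. -/
def FibPow.proj {T0 T : Type} (g : T0 → T) (n : ℕ) (t : FibPow g n) : T := g (t.1 0)

variable {X Y Z : Type} [MetricSpace X] [CompactSpace X] [MetricSpace Y] [CompactSpace Y]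
  [MetricSpace Z] [CompactSpace Z]

/-- The componentwise dynamics on the fiber powers of a factor map. -/
def FactorMap.fibPowMap {S' : SmaleSpace Z} {S : SmaleSpace X} (g : FactorMap S' S)
    (M : ℕ) (z : FibPow g.toFun M) : FibPow g.toFun M :=
  ⟨fun i => S'.phi (z.1 i), by
    intro i j
    rw [g.equivariant, g.equivariant, z.2 i j]⟩

/-- `Σ_{0,M} = Y ×_X Z_M`. -/
def Sigma0M {SY : SmaleSpace Y} {SZ : SmaleSpace Z} {S : SmaleSpace X}
    (f : FactorMap SY S) (g : FactorMap SZ S) (M : ℕ) : Type :=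
  {p : Y × FibPow g.toFun M // f.toFun p.1 = FibPow.proj g.toFun M p.2}

instance {SY : SmaleSpace Y} {SZ : SmaleSpace Z} {S : SmaleSpace X}
    (f : FactorMap SY S) (g : FactorMap SZ S) (M : ℕ) :
    TopologicalSpace (Sigma0M f g M) :=
  instTopologicalSpaceSubtype

/-- `Σ_{L,M} = Y_L ×_X Z_M`. -/
def SigmaLM {SY : SmaleSpace Y} {SZ : SmaleSpace Z} {S : SmaleSpace X}
    (f : FactorMap SY S) (g : FactorMap SZ S) (L M : ℕ) : Type :=
  {p : FibPow f.toFun L × FibPow g.toFun M //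
    FibPow.proj f.toFun L p.1 = FibPow.proj g.toFun M p.2}

instance {SY : SmaleSpace Y} {SZ : SmaleSpace Z} {S : SmaleSpace X}
    (f : FactorMap SY S) (g : FactorMap SZ S) (L M : ℕ) :
    TopologicalSpace (SigmaLM f g L M) :=
  instTopologicalSpaceSubtype

variable {SY : SmaleSpace Y} {SZ : SmaleSpace Z} {S : SmaleSpace X}

/-- The dynamics `σ_{0,M}` on `Σ_{0,M}`. -/
def sigma0MMap (f : FactorMap SY S) (g : FactorMap SZ S) (M : ℕ)
    (p : Sigma0M f g M) : Sigma0M f g M :=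
  ⟨(SY.phi p.1.1, g.fibPowMap M p.1.2), by
    show f.toFun (SY.phi p.1.1) = g.toFun (SZ.phi (p.1.2.1 0))
    rw [f.equivariant, g.equivariant]
    exact congrArg _ p.2⟩

/-- The dynamics `σ_{L,M}` on `Σ_{L,M}`. -/
def sigmaLMMap (f : FactorMap SY S) (g : FactorMap SZ S) (L M : ℕ)
    (p : SigmaLM f g L M) : SigmaLM f g L M :=
  ⟨(f.fibPowMap L p.1.1, g.fibPowMap M p.1.2), by
    show f.toFun (SY.phi (p.1.1.1 0)) = g.toFun (SZ.phi (p.1.2.1 0))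
    rw [f.equivariant, g.equivariant]
    exact congrArg _ p.2⟩

/-- The natural projection `Σ_{0,M} → Z_M` forgetting the `Y`-coordinate. -/
def sigmaProj (f : FactorMap SY S) (g : FactorMap SZ S) (M : ℕ)
    (p : Sigma0M f g M) : FibPow g.toFun M :=
  p.1.2

/-- Stable equivalence on `Σ_{0,M}` (componentwise, for the product dynamics). -/
def sigma0MStablyEquiv (f : FactorMap SY S) (g : FactorMap SZ S) (M : ℕ)
    (p q : Sigma0M f g M) : Prop :=
  SY.stablyEquiv p.1.1 q.1.1 ∧ ∀ i, SZ.stablyEquiv (p.1.2.1 i) (q.1.2.1 i)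

/-- Stable equivalence on `Z_M` (componentwise, for the dynamics `ζ_M`). -/
def fibPowStablyEquiv (g : FactorMap SZ S) (M : ℕ) (z w : FibPow g.toFun M) : Prop :=
  ∀ i, SZ.stablyEquiv (z.1 i) (w.1 i)

/-- The canonical comparison map `Σ_{L,M} → Σ_{0,M} ×_{Z_M} ⋯ ×_{Z_M} Σ_{0,M}`
(`(L+1)` factors), `(y_0, …, y_L, z) ↦ ((y_0, z), …, (y_L, z))`. -/
def sigmaCompare (f : FactorMap SY S) (g : FactorMap SZ S) (L M : ℕ)
    (p : SigmaLM f g L M) : FibPow (sigmaProj f g M) L :=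
  ⟨fun i => ⟨(p.1.1.1 i, p.1.2), (p.1.1.2 i 0).trans p.2⟩, fun _ _ => rfl⟩

/-- The componentwise dynamics on `Σ_{0,M} ×_{Z_M} ⋯ ×_{Z_M} Σ_{0,M}`. -/
def sigmaFibDyn (f : FactorMap SY S) (g : FactorMap SZ S) (L M : ℕ)
    (v : FibPow (sigmaProj f g M) L) : FibPow (sigmaProj f g M) L :=
  ⟨fun i => sigma0MMap f g M (v.1 i), by
    intro i j
    show g.fibPowMap M (sigmaProj f g M (v.1 i)) = g.fibPowMap M (sigmaProj f g M (v.1 j))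
    rw [v.2 i j]⟩

section Aux

/-- Iterated equivariance for a factor map. -/
lemma FactorMap.iterate_equivariant {X Y : Type} [MetricSpace X] [CompactSpace X]
    [MetricSpace Y] [CompactSpace Y] {S : SmaleSpace X} {S' : SmaleSpace Y}
    (f : FactorMap S S') (n : ℕ) (x : X) :
    f.toFun ((⇑S.phi)^[n] x) = (⇑S'.phi)^[n] (f.toFun x) := by
  induction n with
  | zero => rfl
  | succ n ih =>
      rw [Function.iterate_succ_apply', Function.iterate_succ_apply', f.equivariant, ih]

/-- A factor map sends stably equivalent points to stably equivalent points. -/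
lemma FactorMap.map_stablyEquiv {X Y : Type} [MetricSpace X] [CompactSpace X]
    [MetricSpace Y] [CompactSpace Y] {S : SmaleSpace X} {S' : SmaleSpace Y}
    (f : FactorMap S S') {x y : X} (h : S.stablyEquiv x y) :
    S'.stablyEquiv (f.toFun x) (f.toFun y) := by
  have huc : UniformContinuous f.toFun :=
    CompactSpace.uniformContinuous_of_continuous f.continuous_toFun
  rw [Metric.uniformContinuous_iff] at huc
  rw [SmaleSpace.stablyEquiv, Metric.tendsto_atTop] at h ⊢
  intro ε hε
  obtain ⟨δ, hδ, hδ'⟩ := huc ε hε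
  obtain ⟨N, hN⟩ := h δ hδ
  refine ⟨N, fun n hn => ?_⟩
  have := hN n hn
  rw [Real.dist_eq, sub_zero, abs_of_nonneg dist_nonneg] at this ⊢
  rw [← f.iterate_equivariant, ← f.iterate_equivariant]
  exact hδ' this

end Aux

/-- Let `(X, φ)` be a non-wandering Smale space with an
`s/u`-bijective pair `(Y, ψ, f, Z, ζ, g)`, with fiber powers `Z_M` of `Z` over `X` and
`Σ_{L,M} = Y_L ×_X Z_M`.  Then for each `M` the natural map `Σ_{0,M} → Z_M` (projection
forgetting the `Y`-coordinate) is an `s`-bijective factor map of Smale spaces, and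
`Σ_{L,M}` is canonically identified (equivariantly homeomorphically) with the
`(L+1)`-fold fiber product of `Σ_{0,M}` over `Z_M`. -/
theorem sigma0M_s_bijective_and_sigmaLM_fiber_product
    (S : SmaleSpace X) (hnw : S.NonWandering)
    (SY : SmaleSpace Y) (SZ : SmaleSpace Z)
    (f : FactorMap SY S) (hf : f.IsSBijective)
    (hYu : SY.TotallyDisconnectedUnstableSets)
    (g : FactorMap SZ S) (hg : g.IsUBijective)
    (hZs : SZ.TotallyDisconnectedStableSets)
    (L M : ℕ) :
    -- `Σ_{0,M} → Z_M` is a factor map ...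
    (Continuous (sigmaProj f g M) ∧ Function.Surjective (sigmaProj f g M) ∧
      ∀ p, sigmaProj f g M (sigma0MMap f g M p) = g.fibPowMap M (sigmaProj f g M p)) ∧
    -- ... which is `s`-bijective
    (∀ p : Sigma0M f g M,
      Set.BijOn (sigmaProj f g M) {q | sigma0MStablyEquiv f g M p q}
        {w | fibPowStablyEquiv g M (sigmaProj f g M p) w}) ∧
    -- and `Σ_{L,M}` is the `(L+1)`-fold fiber product of `Σ_{0,M}` over `Z_M`
    (IsHomeomorph (sigmaCompare f g L M) ∧
      ∀ p, sigmaCompare f g L M (sigmaLMMap f g L M p) =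
        sigmaFibDyn f g L M (sigmaCompare f g L M p)) := by
  classical
  constructor
  · refine ⟨?_, ?_, fun p => rfl⟩
    · exact continuous_snd.comp continuous_subtype_val
    · intro z
      obtain ⟨y, hy⟩ := f.surjective (g.toFun (z.1 0))
      exact ⟨⟨(y, z), hy⟩, rfl⟩
  constructor
  · intro p
    refine ⟨fun q hq => hq.2, fun q hq q' hq' hqq' => ?_, fun w hw => ?_⟩
    · -- injectivity
      have hz : q.1.2 = q'.1.2 := hqq'
      have hfy : f.toFun q.1.1 = f.toFun q'.1.1 := by
        rw [q.2, q'.2, hz]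
      have := (hf p.1.1).injOn hq.1 hq'.1 hfy
      exact Subtype.ext (Prod.ext this hz)
    · -- surjectivity onto stable class
      have h0 : S.stablyEquiv (f.toFun p.1.1) (g.toFun (w.1 0)) := by
        rw [p.2]
        exact g.map_stablyEquiv (hw 0)
      obtain ⟨y, hy, hfy⟩ := (hf p.1.1).surjOn h0
      exact ⟨⟨(y, w), hfy⟩, ⟨hy, hw⟩, rfl⟩
  · constructor
    · -- homeomorphism
      let e : SigmaLM f g L M ≃ FibPow (sigmaProj f g M) L :=
        { toFun := sigmaCompare f g L M
          invFun := fun v =>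
            ⟨(⟨fun i => (v.1 i).1.1, by
                intro i j
                have hzz : (v.1 i).1.2 = (v.1 j).1.2 := v.2 i j
                rw [(v.1 i).2, (v.1 j).2, hzz]⟩, (v.1 0).1.2), (v.1 0).2⟩
          left_inv := fun p => rfl
          right_inv := fun v => by
            refine Subtype.ext (funext fun i => Subtype.ext (Prod.ext rfl ?_))
            exact v.2 0 i }
      have hc1 : Continuous (sigmaCompare f g L M) := by
        refine Continuous.subtype_mk (continuous_pi fun i => Continuous.subtype_mk ?_ _) _
        exact Continuous.prodMk
          ((continuous_apply i).comp
            (continuous_subtype_val.comp (continuous_fst.comp continuous_subtype_val)))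
          (continuous_snd.comp continuous_subtype_val)
      have hc2 : Continuous e.symm := by
        refine Continuous.subtype_mk (Continuous.prodMk (Continuous.subtype_mk
          (continuous_pi fun i => ?_) _) ?_) _
        · exact continuous_fst.comp (continuous_subtype_val.comp
            ((continuous_apply i).comp continuous_subtype_val))
        · exact continuous_snd.comp (continuous_subtype_val.comp
            ((continuous_apply 0).comp continuous_subtype_val))
      exact (Homeomorph.mk e hc1 hc2).isHomeomorph
    · intro p
      rfl
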